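/- There exist a constant C > 0 and a real number x₀ such that for all real x ≥ x₀, the maximal prime gap up to x satisfies d_max(x) ≥ log x − C · log log x; that is, there is an index n with p_{n+1} ≤ x and p_{n+1} − p_n ≥ log x − C · log log x. -/

import Mathlib

lemma tenKsq (K : ℕ) (hK : 20 ≤ K) : 10 * (K + 1) ^ 2 ≤ 2 ^ K := by
  induction K, hK using Nat.le_induction with
  | base => norm_num
  | succ n hn ih =>
    calc 10 * (n + 1 + 1) ^ 2 ≤ 2 * (10 * (n + 1) ^ 2) := by nlinarith
      _ ≤ 2 * 2 ^ n := by omega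
      _ = 2 ^ (n + 1) := by ring

lemma crt_list : ∀ (l : List (ℕ × ℕ)) (m r : ℕ),
    (l.map Prod.fst).Pairwise Nat.Coprime →
    (∀ p ∈ l, Nat.Coprime m p.1) →
    ∃ n, n ≡ r [MOD m] ∧ ∀ p ∈ l, n ≡ p.2 [MOD p.1] := by
  intro l
  induction l with
  | nil => exact fun m r _ _ => ⟨r, Nat.ModEq.refl r, by simp⟩
  | cons q t ih =>
    intro m r hpw hco
    have hmq : Nat.Coprime m q.1 := hco q List.mem_cons_self
    rw [List.map_cons] at hpw
    obtain ⟨hpw1, hpw2⟩ := List.pairwise_cons.1 hpw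
    obtain ⟨cv, hc1, hc2⟩ := Nat.chineseRemainder hmq r q.2
    obtain ⟨n, hn1, hn2⟩ := ih (m * q.1) cv hpw2 (fun p hp => by
      have h1 : Nat.Coprime m p.1 := hco p (List.mem_cons_of_mem _ hp)
      have h2 : Nat.Coprime q.1 p.1 := hpw1 p.1 (List.mem_map_of_mem (f := Prod.fst) hp)
      exact Nat.coprime_mul_iff_left.2 ⟨h1, h2⟩)
    refine ⟨n, (Nat.ModEq.of_dvd (dvd_mul_right m q.1) hn1).trans hc1, ?_⟩
    intro p hp
    rcases List.mem_cons.1 hp with hh | hh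
    · subst hh
      exact (Nat.ModEq.of_dvd (dvd_mul_left p.1 m) hn1).trans hc2
    · exact hn2 p hh

lemma gap_construction (z : ℕ) (hz : 2 ^ 20 ≤ z) :
    ∃ n : ℕ, 2 ≤ n ∧ (∀ j, 2 ≤ j → j ≤ z → ¬ Nat.Prime (n + j)) ∧
      n ≤ 2 ^ (z + z / 5 + 2) := by
  have hz0 : z ≠ 0 := by intro hx; rw [hx] at hz; norm_num at hz
  set K := Nat.log 2 z with hKdef
  have hK20 : 20 ≤ K := Nat.le_log_of_pow_le (by norm_num) hz
  have h2K : 2 ^ K ≤ z := Nat.pow_log_le_self 2 hz0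
  have hzK : z < 2 ^ (K + 1) := Nat.lt_pow_succ_log_self (by norm_num) z
  set h := z / 2 with hhdef
  set S := (Finset.range (h + 1)).filter (fun p => Nat.Prime p ∧ p ≠ 2) with hSdef
  set A := ∏ p ∈ S, p with hAdef
  have hSprime : ∀ p ∈ S, Nat.Prime p := fun p hp => ((Finset.mem_filter.1 hp).2).1
  have hSne2 : ∀ p ∈ S, p ≠ 2 := fun p hp => ((Finset.mem_filter.1 hp).2).2
  have hSle : ∀ p ∈ S, p ≤ h := by
    intro p hp
    have := Finset.mem_range.1 (Finset.mem_filter.1 hp).1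
    omega
  have hApos : 0 < A := Finset.prod_pos (fun p hp => (hSprime p hp).pos)
  have hAle : A ≤ 4 ^ h := by
    have h1 : A ≤ primorial h := by
      rw [hAdef, primorial]
      apply Finset.prod_le_prod_of_subset_of_one_le'
      · intro p hp
        rw [Finset.mem_filter] at hp ⊢
        exact ⟨hp.1, hp.2.1⟩
      · intro i hi _
        exact (Nat.succ_le_of_lt ((Finset.mem_filter.1 hi).2).pos)
    exact h1.trans (primorial_le_4_pow h)
  have hA2 : ¬ 2 ∣ A := by
    intro hdvd
    obtain ⟨p, hpS, hp2⟩ := Nat.prime_two.prime.exists_mem_finset_dvd hdvd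
    exact hSne2 p hpS (((Nat.prime_dvd_prime_iff_eq Nat.prime_two (hSprime p hpS)).1 hp2).symm)
  -- Bertrand primes
  have hq : ∀ i : ℕ, ∃ p, Nat.Prime p ∧ 2 ^ i * z < p ∧ p ≤ 2 * (2 ^ i * z) :=
    fun i => Nat.exists_prime_lt_and_le_two_mul _
      (Nat.mul_ne_zero (pow_ne_zero i (by norm_num)) hz0)
  choose qf hqP hqlb hqub using hq
  have hqgtz : ∀ i, z < qf i := fun i =>
    lt_of_le_of_lt (Nat.le_mul_of_pos_left z (pow_pos (by norm_num) i)) (hqlb i)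
  set l : List (ℕ × ℕ) := (List.range K).map (fun i => (qf i, qf i - 2 ^ (i + 1))) with hldef
  have hlfst : l.map Prod.fst = (List.range K).map qf := by
    simp [hldef, Function.comp]
  have hqmono : ∀ i j : ℕ, i < j → qf i < qf j := by
    intro i j hij
    calc qf i ≤ 2 * (2 ^ i * z) := hqub i
      _ = 2 ^ (i + 1) * z := by ring
      _ ≤ 2 ^ j * z := by
          have : (2:ℕ) ^ (i+1) ≤ 2 ^ j := Nat.pow_le_pow_right (by norm_num) hij
          exact Nat.mul_le_mul_right z this
      _ < qf j := hqlb j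
  have hpw : (l.map Prod.fst).Pairwise Nat.Coprime := by
    rw [hlfst]
    refine List.Pairwise.map _ ?_ List.pairwise_lt_range
    intro a b hab
    exact (Nat.coprime_primes (hqP a) (hqP b)).2 (Nat.ne_of_lt (hqmono a b hab))
  have hco : ∀ p ∈ l, Nat.Coprime (2 * A) p.1 := by
    intro p hp
    obtain ⟨i, hi, rfl⟩ := List.mem_map.1 hp
    rw [Nat.coprime_comm]
    rw [Nat.Prime.coprime_iff_not_dvd (hqP i)]
    intro hdvd
    rcases (Nat.Prime.dvd_mul (hqP i)).1 hdvd with h2 | hA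
    · have h3 := Nat.le_of_dvd (by norm_num) h2
      have h4 := hqgtz i
      omega
    · obtain ⟨p', hp'S, hp'd⟩ := (hqP i).prime.exists_mem_finset_dvd hA
      have hp'le : p' ≤ h := hSle p' hp'S
      have h5 : qf i ≤ p' := Nat.le_of_dvd (hSprime p' hp'S).pos hp'd
      have h6 := hqgtz i
      have h7 : h ≤ z := Nat.div_le_self z 2
      omega
  obtain ⟨n₀, hbase, hl⟩ := crt_list l (2 * A) A hpw hco
  set Qp := (l.map Prod.fst).prod with hQpdef
  set T := 2 * A * Qp with hTdef
  have hQppos : 0 < Qp := by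
    apply List.prod_pos
    intro a ha
    rw [hlfst] at ha
    obtain ⟨i, _, rfl⟩ := List.mem_map.1 ha
    exact (hqP i).pos
  have hTpos : 0 < T := by positivity
  set n := n₀ % T + T with hndef
  have hnT : n ≡ n₀ [MOD T] := by
    have h1 : n₀ % T ≡ n₀ [MOD T] := Nat.mod_modEq n₀ T
    have h2 : (T:ℕ) ≡ 0 [MOD T] := (Nat.modEq_zero_iff_dvd).2 dvd_rfl
    have := h1.add h2; rw [add_zero] at this; exact this
  have hnlb : T ≤ n := Nat.le_add_left T (n₀ % T)
  have hq0T : qf 0 ≤ T := by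
    have hmem : qf 0 ∈ l.map Prod.fst := by
      rw [hlfst]
      exact List.mem_map_of_mem (f := qf) (List.mem_range.2 (by omega))
    have : qf 0 ∣ Qp := List.dvd_prod hmem
    exact Nat.le_of_dvd hTpos (this.trans (dvd_mul_left Qp (2 * A)))
  have hzn : z < n := lt_of_lt_of_le (lt_of_lt_of_le (hqgtz 0) hq0T) hnlb
  have hmod2A : n ≡ A [MOD 2 * A] :=
    (Nat.ModEq.of_dvd (dvd_mul_right (2 * A) Qp) hnT).trans hbase
  have hAdvd : A ∣ n := by
    have h1 : n ≡ A [MOD A] := Nat.ModEq.of_dvd (dvd_mul_left A 2) hmod2A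
    have h2 : A ≡ 0 [MOD A] := (Nat.modEq_zero_iff_dvd).2 dvd_rfl
    exact (Nat.modEq_zero_iff_dvd).1 (h1.trans h2)
  have hodd : n % 2 = 1 := by
    have h1 : n ≡ A [MOD 2] := Nat.ModEq.of_dvd (dvd_mul_right 2 A) hmod2A
    have h2 : A % 2 = 1 := by omega
    have h3 : n % 2 = A % 2 := h1
    omega
  have hpairdvd : ∀ i : ℕ, i < K → qf i ∣ n + 2 ^ (i + 1) := by
    intro i hi
    have hmem : (qf i, qf i - 2 ^ (i + 1)) ∈ l := by
      rw [hldef]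
      exact List.mem_map.2 ⟨i, List.mem_range.2 hi, rfl⟩
    have hqT : qf i ∣ T := by
      have hm2 : qf i ∈ l.map Prod.fst := by
        rw [hlfst]; exact List.mem_map_of_mem (f := qf) (List.mem_range.2 hi)
      exact (List.dvd_prod hm2).trans (dvd_mul_left Qp (2 * A))
    have hpair : n ≡ qf i - 2 ^ (i + 1) [MOD qf i] :=
      (Nat.ModEq.of_dvd hqT hnT).trans (hl _ hmem)
    have hle : 2 ^ (i + 1) ≤ qf i := by
      have h1 : (2:ℕ) ^ (i + 1) ≤ 2 ^ K := Nat.pow_le_pow_right (by norm_num) hi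
      have := hqgtz i
      omega
    have h2 : n + 2 ^ (i + 1) ≡ (qf i - 2 ^ (i + 1)) + 2 ^ (i + 1) [MOD qf i] :=
      hpair.add_right _
    rw [Nat.sub_add_cancel hle] at h2
    have h3 : qf i ≡ 0 [MOD qf i] := (Nat.modEq_zero_iff_dvd).2 dvd_rfl
    exact (Nat.modEq_zero_iff_dvd).1 (h2.trans h3)
  refine ⟨n, by omega, ?_, ?_⟩
  · -- compositeness
    intro j hj2 hjz hP
    have hnj : 4 ≤ n + j := by omega
    rcases Nat.even_or_odd j with hje | hjo
    · -- j even
      have hj0 : j ≠ 0 := by omega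
      have h2j : 2 ∣ j := hje.two_dvd
      set v := j.factorization 2 with hvdef
      set m := j / 2 ^ v with hmdef
      have hvm : 2 ^ v * m = j := Nat.ordProj_mul_ordCompl_eq_self j 2
      have hmodd : ¬ 2 ∣ m := Nat.not_dvd_ordCompl Nat.prime_two hj0
      have hv1 : 1 ≤ v := (Nat.Prime.factorization_pos_of_dvd Nat.prime_two hj0 h2j)
      have hmpos : 0 < m := Nat.ordCompl_pos 2 hj0
      rcases eq_or_lt_of_le (show 1 ≤ m by omega) with hm1 | hm2
      · -- m = 1, j = 2 ^ v
        have hjpow : j = 2 ^ v := by rw [← hvm, ← hm1]; simp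
        have hvK : v ≤ K := Nat.le_log_of_pow_le (by norm_num) (by omega)
        have hiK : v - 1 < K := by omega
        have hdvd : qf (v - 1) ∣ n + j := by
          have := hpairdvd (v - 1) hiK
          have hv : v - 1 + 1 = v := by omega
          rw [hv] at this
          rwa [hjpow]
        have hlt : qf (v - 1) < n + j := by
          have h1 : z < qf (v - 1) := hqgtz _
          have h2 : qf (v-1) ∣ Qp := by
            apply List.dvd_prod
            rw [hlfst]
            exact List.mem_map_of_mem (f := qf) (List.mem_range.2 hiK)
          have h3 : qf (v-1) ≤ T := Nat.le_of_dvd hTpos (h2.trans (dvd_mul_left Qp (2*A)))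
          omega
        rcases (hP.eq_one_or_self_of_dvd _ hdvd) with hcase | hcase
        · exact Nat.Prime.one_lt (hqP (v-1)) |>.ne' hcase
        · omega
      · -- m ≥ 2
        set p := m.minFac with hpdef
        have hpprime : p.Prime := Nat.minFac_prime (by omega)
        have hpm : p ∣ m := Nat.minFac_dvd m
        have hpne2 : p ≠ 2 := by
          intro hp2
          rw [hp2] at hpm
          exact hmodd hpm
        have hpj : p ∣ j := hpm.trans ⟨2 ^ v, by rw [← hvm]; ring⟩
        have h2m : 2 * m ≤ j := by
          have h2v : 2 ≤ 2 ^ v := by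
            calc (2:ℕ) = 2 ^ 1 := by norm_num
              _ ≤ 2 ^ v := Nat.pow_le_pow_right (by norm_num) hv1
          nlinarith
        have hpm' : p ≤ m := Nat.minFac_le hmpos
        have hph : p ≤ h := by
          have : m ≤ z / 2 := Nat.le_div_iff_mul_le (by norm_num) |>.2 (by omega)
          omega
        have hpS : p ∈ S := by
          rw [hSdef, Finset.mem_filter, Finset.mem_range]
          exact ⟨by omega, hpprime, hpne2⟩
        have hpA : p ∣ A := Finset.dvd_prod_of_mem _ hpS
        have hpnj : p ∣ n + j := dvd_add (hpA.trans hAdvd) hpj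
        have hplt : p < n + j := by
          have h7 : h ≤ z := Nat.div_le_self z 2
          omega
        rcases (hP.eq_one_or_self_of_dvd _ hpnj) with hcase | hcase
        · exact hpprime.one_lt.ne' hcase
        · omega
    · -- j odd
      have h2dvd : 2 ∣ n + j := by
        have := Nat.odd_iff.1 hjo
        omega
      rcases (hP.eq_one_or_self_of_dvd _ h2dvd) with hcase | hcase
      · omega
      · omega
  · -- size bound
    have hQple : Qp ≤ (z * z) ^ K := by
      have hlen : (l.map Prod.fst).length = K := by simp [hldef]
      rw [hQpdef, ← hlen]
      apply List.prod_le_pow_card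
      intro x hx
      rw [hlfst] at hx
      obtain ⟨i, hi, rfl⟩ := List.mem_map.1 hx
      have hiK := List.mem_range.1 hi
      calc qf i ≤ 2 * (2 ^ i * z) := hqub i
        _ = 2 ^ (i + 1) * z := by ring
        _ ≤ 2 ^ K * z := Nat.mul_le_mul_right z (Nat.pow_le_pow_right (by norm_num) hiK)
        _ ≤ z * z := Nat.mul_le_mul_right z h2K
    have hzsq : (z * z) ^ K ≤ 2 ^ (2 * K * (K + 1)) := by
      calc (z * z) ^ K ≤ (2 ^ (K+1) * 2 ^ (K+1)) ^ K :=
            Nat.pow_le_pow_left (Nat.mul_le_mul hzK.le hzK.le) K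
        _ = 2 ^ (2 * K * (K + 1)) := by
            rw [← pow_add, ← pow_mul]
            ring_nf
    have hE : 2 * K * (K + 1) ≤ z / 5 := by
      have h1 : 10 * (K + 1) ^ 2 ≤ 2 ^ K := tenKsq K hK20
      have h2 : 5 * (2 * K * (K + 1)) ≤ 10 * (K + 1) ^ 2 := by nlinarith
      have h3 : 5 * (2 * K * (K + 1)) ≤ z := by omega
      omega
    have hA2z : A ≤ 2 ^ z := by
      calc A ≤ 4 ^ h := hAle
        _ = 2 ^ (2 * h) := by rw [pow_mul]; norm_num
        _ ≤ 2 ^ z := Nat.pow_le_pow_right (by norm_num) (by omega)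
    have hT2 : T ≤ 2 ^ (z + z / 5 + 1) := by
      calc T = 2 * A * Qp := hTdef
        _ ≤ 2 * 2 ^ z * 2 ^ (2 * K * (K + 1)) :=
            Nat.mul_le_mul (Nat.mul_le_mul_left 2 hA2z) (hQple.trans hzsq)
        _ ≤ 2 * 2 ^ z * 2 ^ (z / 5) :=
            Nat.mul_le_mul_left _ (Nat.pow_le_pow_right (by norm_num) hE)
        _ = 2 ^ (z + z / 5 + 1) := by ring
    have hn2T : n < 2 * T := by
      have := Nat.mod_lt n₀ hTpos
      omega
    calc n ≤ 2 * T := hn2T.le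
      _ ≤ 2 * 2 ^ (z + z / 5 + 1) := Nat.mul_le_mul_left 2 hT2
      _ = 2 ^ (z + z / 5 + 2) := by ring

/-- There exist C > 0 and x₀ such that for all x ≥ x₀, the maximal prime gap
up to x satisfies d_max(x) ≥ log x − C·log log x: there is a pair of consecutive primes
p_k, p_{k+1} with p_{k+1} ≤ x and p_{k+1} − p_k ≥ log x − C·log log x. -/
theorem maximal_prime_gap_lower_bound :
    ∃ C : ℝ, 0 < C ∧ ∃ x₀ : ℝ, ∀ x : ℝ, x₀ ≤ x →
      ∃ k : ℕ, (Nat.nth Nat.Prime (k + 1) : ℝ) ≤ x ∧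
        (Nat.nth Nat.Prime (k + 1) : ℝ) - (Nat.nth Nat.Prime k : ℝ) ≥
          Real.log x - C * Real.log (Real.log x) := by
  refine ⟨1, one_pos, Real.exp ((2:ℝ) ^ 20), ?_⟩
  intro x hx
  have hxpos : 0 < x := lt_of_lt_of_le (Real.exp_pos _) hx
  set L := Real.log x with hLdef
  have hL : (2:ℝ) ^ 20 ≤ L := by
    rw [hLdef, Real.le_log_iff_exp_le hxpos]; exact hx
  have hL0 : 0 ≤ L := le_trans (by norm_num) hL
  set z : ℕ := ⌊L⌋₊ + 1 with hzdef
  have hzL : (z : ℝ) ≤ L + 1 := by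
    rw [hzdef]; push_cast
    have := Nat.floor_le hL0
    linarith
  have hLz : L < z := by
    rw [hzdef]; push_cast; exact Nat.lt_floor_add_one L
  have hz20 : 2 ^ 20 ≤ z := by
    have h1 : (2 ^ 20 : ℕ) ≤ ⌊L⌋₊ := Nat.le_floor (by exact_mod_cast hL)
    omega
  clear_value z
  obtain ⟨n, hn2, hcomp, hbound⟩ := gap_construction z hz20
  set P := (Finset.range (n + 2)).filter Nat.Prime with hPdef
  have hPne : P.Nonempty :=
    ⟨2, Finset.mem_filter.2 ⟨Finset.mem_range.2 (by omega), Nat.prime_two⟩⟩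
  set p := P.max' hPne with hpdef
  have hpmem := P.max'_mem hPne
  rw [← hpdef] at hpmem
  obtain ⟨hplt', hpprime⟩ := Finset.mem_filter.1 hpmem
  have hplt : p < n + 2 := Finset.mem_range.1 hplt'
  have hpmax : ∀ q ∈ P, q ≤ p := fun q hq => P.le_max' q hq
  set k := Nat.count Nat.Prime p with hkdef
  have hnthk : Nat.nth Nat.Prime k = p := Nat.nth_count hpprime
  obtain ⟨b, hbP, hbl, hbu⟩ := Nat.exists_prime_lt_and_le_two_mul (n + 1) (by omega)
  have hcountp : Nat.count Nat.Prime (p + 1) = k + 1 := by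
    rw [Nat.count_succ, if_pos hpprime]
  have hcountb : k + 1 < Nat.count Nat.Prime (b + 1) := by
    have h1 : p + 1 ≤ b := by omega
    have h2 : Nat.count Nat.Prime (p + 1) ≤ Nat.count Nat.Prime b := Nat.count_monotone _ h1
    rw [Nat.count_succ, if_pos hbP]
    omega
  have hQ1b : Nat.nth Nat.Prime (k + 1) < b + 1 := Nat.nth_lt_of_lt_count hcountb
  have hQ1gt : p < Nat.nth Nat.Prime (k + 1) := by
    conv_lhs => rw [← hnthk]
    exact (Nat.nth_lt_nth Nat.infinite_setOf_prime).2 (Nat.lt_succ_self k)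
  have hQ1prime : Nat.Prime (Nat.nth Nat.Prime (k + 1)) := Nat.prime_nth_prime (k + 1)
  have hQ1n2 : n + 2 ≤ Nat.nth Nat.Prime (k + 1) := by
    by_contra hcon
    push_neg at hcon
    have hmem : Nat.nth Nat.Prime (k + 1) ∈ P :=
      Finset.mem_filter.2 ⟨Finset.mem_range.2 hcon, hQ1prime⟩
    have := hpmax _ hmem
    omega
  have hQ1nz : n + z + 1 ≤ Nat.nth Nat.Prime (k + 1) := by
    by_contra hcon
    push_neg at hcon
    have hj2 : 2 ≤ Nat.nth Nat.Prime (k + 1) - n := by omega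
    have hjz : Nat.nth Nat.Prime (k + 1) - n ≤ z := by omega
    have hc := hcomp _ hj2 hjz
    rw [Nat.add_sub_cancel' (by omega : n ≤ Nat.nth Nat.Prime (k + 1))] at hc
    exact hc hQ1prime
  have hp5 : ((z / 5 : ℕ) : ℝ) ≤ (z : ℝ) / 5 := Nat.cast_div_le
  have hlog2 : Real.log 2 ≤ 0.7 := le_of_lt (lt_trans Real.log_two_lt_d9 (by norm_num))
  have hlog2' : 0 ≤ Real.log 2 := Real.log_nonneg one_le_two
  have hzr : (2:ℝ) ^ 20 ≤ (z : ℝ) := le_trans hL hLz.le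
  refine ⟨k, ?_, ?_⟩
  · have hQn : Nat.nth Nat.Prime (k + 1) ≤ 2 ^ (z + z / 5 + 4) := by
      have h3 : (1 : ℕ) ≤ 2 ^ (z + z / 5 + 2) := Nat.one_le_two_pow
      have h4 : 2 * (2 ^ (z + z / 5 + 2) + 1) ≤ 2 ^ (z + z / 5 + 4) := by
        have : (2:ℕ) ^ (z + z / 5 + 4) = 4 * 2 ^ (z + z / 5 + 2) := by ring
        omega
      omega
    have hWle : ((z + z / 5 + 4 : ℕ) : ℝ) ≤ 6 / 5 * (z : ℝ) + 4 := by
      push_cast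
      linarith
    have hW : ((z + z / 5 + 4 : ℕ) : ℝ) * Real.log 2 ≤ L := by
      have hWpos : (0:ℝ) ≤ ((z + z / 5 + 4 : ℕ) : ℝ) := Nat.cast_nonneg _
      calc ((z + z / 5 + 4 : ℕ) : ℝ) * Real.log 2 ≤ (6 / 5 * (z : ℝ) + 4) * 0.7 := by
            apply mul_le_mul hWle hlog2 hlog2' (by positivity)
        _ ≤ (z : ℝ) - 1 := by norm_num; linarith
        _ ≤ L := by linarith
    have hreal : ((2:ℝ)) ^ (z + z / 5 + 4) ≤ x := by
      have he : ((2:ℝ)) ^ (z + z / 5 + 4) = Real.exp (((z + z / 5 + 4 : ℕ) : ℝ) * Real.log 2) := by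
        rw [Real.exp_nat_mul, Real.exp_log two_pos]
      rw [he]
      calc Real.exp (((z + z / 5 + 4 : ℕ) : ℝ) * Real.log 2) ≤ Real.exp L :=
            Real.exp_le_exp.2 hW
        _ = x := Real.exp_log hxpos
    calc (Nat.nth Nat.Prime (k + 1) : ℝ) ≤ ((2 ^ (z + z / 5 + 4) : ℕ) : ℝ) := Nat.cast_le.2 hQn
      _ = (2:ℝ) ^ (z + z / 5 + 4) := by push_cast; ring
      _ ≤ x := hreal
  · have h1 : (n : ℝ) + z + 1 ≤ (Nat.nth Nat.Prime (k + 1) : ℝ) := by exact_mod_cast hQ1nz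
    have h2 : (Nat.nth Nat.Prime k : ℝ) ≤ (n : ℝ) + 1 := by
      rw [hnthk]
      exact_mod_cast (by omega : p ≤ n + 1)
    have hloglog : 0 ≤ Real.log L := Real.log_nonneg (by linarith)
    have : Real.log x - 1 * Real.log (Real.log x) ≤ L := by
      rw [← hLdef]
      linarith
    linarith
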